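/- In the modular RPS built from a Gray-code ordering of Reed–Solomon codewords: let C_RS ⊆ F_q^{n_R} be a code of minimum distance n_R − k_R + 1 with systematic encoding, let (σ_0, …, σ_{M−1}) be a (k_R, r)-Gray code over a subset X ⊆ F_q (so consecutive σ_i differ in exactly one coordinate), and let c_i ∈ C_RS have prefix σ_i. Then the concatenation c_0 c_1 ⋯ c_{M−1} is an (n_R, d+1)_q modular robust positioning sequence, where d + 1 = (n_R − k_R)/2: any two distinct length-n_R subwords starting at positions congruent mod n_R have Hamming distance at least d + 1. -/

import Mathlib

/-- The contiguous length-`n` window of the sequence `s` starting at position `i`. -/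
def window {α : Type*} (s : ℕ → α) (n i : ℕ) : Fin n → α := fun k => s (i + k)

/-- `s` (restricted to its first `N` entries) is a modular robust positioning sequence of
strength `n` and distance `d`: any two distinct contiguous length-`n` subwords starting at
the same modular position (indices congruent mod `n`) have Hamming distance at least `d`. -/
def IsMRPS {α : Type*} [DecidableEq α] (s : ℕ → α) (N n d : ℕ) : Prop :=
  ∀ i j : ℕ, i + n ≤ N → j + n ≤ N → i ≠ j → i % n = j % n →
    d ≤ hammingDist (window s n i) (window s n j)

/-- Number of positions `p` with `lo ≤ p < hi` where `x` and `y` differ. -/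
def Dd {α : Type*} [DecidableEq α] {n : ℕ} (x y : Fin n → α) (lo hi : ℕ) : ℕ :=
  (Finset.univ.filter fun p : Fin n => lo ≤ (p : ℕ) ∧ (p : ℕ) < hi ∧ x p ≠ y p).card

lemma Dd_split {α : Type*} [DecidableEq α] {n : ℕ} (x y : Fin n → α) {lo mid hi : ℕ}
    (h1 : lo ≤ mid) (h2 : mid ≤ hi) :
    Dd x y lo hi = Dd x y lo mid + Dd x y mid hi := by
  unfold Dd
  rw [← Finset.card_union_of_disjoint, ← Finset.filter_or]
  · apply congrArg
    apply Finset.filter_congr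
    intro p _
    by_cases hne : x p = y p <;> simp [hne] <;> omega
  · rw [Finset.disjoint_left]
    intro p hp hq
    simp only [Finset.mem_filter] at hp hq
    omega

lemma Dd_le {α : Type*} [DecidableEq α] {n : ℕ} (x y : Fin n → α) (lo hi : ℕ) :
    Dd x y lo hi ≤ hi - lo := by
  unfold Dd
  calc (Finset.univ.filter fun p : Fin n => lo ≤ (p : ℕ) ∧ (p : ℕ) < hi ∧ x p ≠ y p).card ≤ (Finset.Ico lo hi).card := by
        apply Finset.card_le_card_of_injOn (fun p : Fin n => (p : ℕ))
        · intro p hp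
          simp only [Finset.mem_coe, Finset.mem_filter] at hp
          simp only [Finset.mem_coe, Finset.mem_Ico]
          omega
        · intro p _ q _ h
          exact Fin.ext h
    _ = hi - lo := Nat.card_Ico lo hi

lemma Dd_triangle {α : Type*} [DecidableEq α] {n : ℕ} (x y z : Fin n → α) (lo hi : ℕ) :
    Dd x z lo hi ≤ Dd x y lo hi + Dd y z lo hi := by
  unfold Dd
  refine le_trans (Finset.card_le_card ?_) (Finset.card_union_le _ _)
  intro p hp
  simp only [Finset.mem_filter, Finset.mem_union] at hp ⊢
  by_cases h : x p = y p
  · exact Or.inr ⟨hp.1, hp.2.1, hp.2.2.1, h ▸ hp.2.2.2⟩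
  · exact Or.inl ⟨hp.1, hp.2.1, hp.2.2.1, h⟩

lemma Dd_comm {α : Type*} [DecidableEq α] {n : ℕ} (x y : Fin n → α) (lo hi : ℕ) :
    Dd x y lo hi = Dd y x lo hi := by
  unfold Dd
  apply congrArg
  apply Finset.filter_congr
  intro p _
  simp [ne_comm]

lemma Dd_full {α : Type*} [DecidableEq α] {n : ℕ} (x y : Fin n → α) :
    hammingDist x y = Dd x y 0 n := by
  unfold Dd hammingDist
  apply congrArg
  apply Finset.filter_congr
  intro p _
  simp [p.isLt]

lemma Dd_prefix_le {α : Type*} [DecidableEq α] {n k : ℕ} (hk : k ≤ n) (x y : Fin n → α) :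
    Dd x y 0 k ≤ hammingDist (fun p : Fin k => x (Fin.castLE hk p))
      (fun p : Fin k => y (Fin.castLE hk p)) := by
  rcases Nat.eq_zero_or_pos k with h0 | hpos
  · subst h0
    have : (Finset.univ.filter fun p : Fin n => 0 ≤ (p : ℕ) ∧ (p : ℕ) < 0 ∧ x p ≠ y p) = ∅ := by
      ext p; simp
    simp [Dd, this]
  · unfold Dd hammingDist
    apply Finset.card_le_card_of_injOn
      (fun p : Fin n => if h : (p : ℕ) < k then (⟨p, h⟩ : Fin k) else ⟨0, hpos⟩)
    · intro p hp
      simp only [Finset.mem_coe, Finset.mem_filter] at hp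
      obtain ⟨-, -, hlt, hne⟩ := hp
      rw [Finset.mem_coe]
      refine Finset.mem_filter.mpr ⟨Finset.mem_univ _, ?_⟩
      show x (Fin.castLE hk (if h : (p : ℕ) < k then (⟨p, h⟩ : Fin k) else ⟨0, hpos⟩)) ≠ _
      rw [dif_pos hlt]
      convert hne <;> exact Fin.ext (by simp [hlt])
    · intro p hp q hq h
      simp only [Finset.coe_filter, Set.mem_setOf_eq] at hp hq
      dsimp only at h
      rw [dif_pos hp.2.2.1, dif_pos hq.2.2.1, Fin.mk.injEq] at h
      exact Fin.ext h

lemma s_val {α : Type*} {M nR : ℕ} (hM : 0 < M) (hnR : 0 < nR) (c : Fin M → Fin nR → α)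
    (a r' : ℕ) (ha : a < M) (hr' : r' < nR) :
    c ⟨((nR * a + r') / nR) % M, Nat.mod_lt _ hM⟩ ⟨(nR * a + r') % nR, Nat.mod_lt _ hnR⟩
      = c ⟨a, ha⟩ ⟨r', hr'⟩ := by
  have h1 : (nR * a + r') / nR = a := by
    rw [Nat.mul_add_div hnR, Nat.div_eq_of_lt hr', Nat.add_zero]
  have h2 : (nR * a + r') % nR = r' := by
    rw [Nat.mul_add_mod, Nat.mod_eq_of_lt hr']
  have e1 : (⟨((nR * a + r') / nR) % M, Nat.mod_lt _ hM⟩ : Fin M) = ⟨a, ha⟩ := by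
    apply Fin.ext
    show ((nR * a + r') / nR) % M = a
    rw [h1]
    exact Nat.mod_eq_of_lt ha
  have e2 : (⟨(nR * a + r') % nR, Nat.mod_lt _ hnR⟩ : Fin nR) = ⟨r', hr'⟩ := Fin.ext h2
  rw [e1, e2]

lemma main_aux {α : Type*} [DecidableEq α]
    (M nR kR d : ℕ) (hM : 0 < M) (hk : kR < nR) (hd : nR - kR = 2 * d + 2)
    (c : Fin M → Fin nR → α)
    (hmin : ∀ i j : Fin M, i ≠ j → nR - kR + 1 ≤ hammingDist (c i) (c j))
    (hgray : ∀ i : Fin M, ∀ h : (i : ℕ) + 1 < M,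
      hammingDist (fun k : Fin kR => c i (Fin.castLE hk.le k))
        (fun k : Fin kR => c ⟨(i : ℕ) + 1, h⟩ (Fin.castLE hk.le k)) = 1)
    (s : ℕ → α)
    (hs : ∀ (a r' : ℕ) (ha : a < M) (hr' : r' < nR), s (nR * a + r') = c ⟨a, ha⟩ ⟨r', hr'⟩) :
    IsMRPS s (M * nR) nR (d + 1) := by
  intro i j hiN hjN hij hmod
  have hnR : 0 < nR := by omega
  obtain ⟨r, hrdef⟩ : ∃ r, i % nR = r := ⟨_, rfl⟩
  obtain ⟨a, hadef⟩ : ∃ a, i / nR = a := ⟨_, rfl⟩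
  obtain ⟨b, hbdef⟩ : ∃ b, j / nR = b := ⟨_, rfl⟩
  have hmod' : j % nR = r := by rw [← hmod, hrdef]
  have hia : i = nR * a + r := by rw [← hadef, ← hrdef, Nat.div_add_mod]
  have hja : j = nR * b + r := by rw [← hbdef, ← hmod', Nat.div_add_mod]
  have hrlt : r < nR := by rw [← hrdef]; exact Nat.mod_lt _ hnR
  have ha : a < M := by
    rw [← hadef]
    exact (Nat.div_lt_iff_lt_mul hnR).mpr (lt_of_lt_of_le (by omega) hiN)
  have hb : b < M := by
    rw [← hbdef]
    exact (Nat.div_lt_iff_lt_mul hnR).mpr (lt_of_lt_of_le (by omega) hjN)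
  have hab : a ≠ b := fun h => hij (by rw [hia, hja, h])
  rcases Nat.eq_zero_or_pos r with hr0 | hr0
  · -- r = 0 : the windows are whole codewords
    have e1 : window s nR i = c ⟨a, ha⟩ := by
      funext k
      show s (i + (k : ℕ)) = _
      rw [show i + (k : ℕ) = nR * a + (k : ℕ) by omega, hs a k ha k.isLt]
    have e2 : window s nR j = c ⟨b, hb⟩ := by
      funext k
      show s (j + (k : ℕ)) = _
      rw [show j + (k : ℕ) = nR * b + (k : ℕ) by omega, hs b k hb k.isLt]
    rw [e1, e2]
    have := hmin ⟨a, ha⟩ ⟨b, hb⟩ (Fin.ne_of_val_ne hab)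
    omega
  · -- r > 0
    have ha1 : a + 1 < M := by
      have h1 : nR * (a + 1) < nR * M := by
        have e : nR * (a + 1) = nR * a + nR := by ring
        have e2 : nR * M = M * nR := by ring
        omega
      exact Nat.lt_of_mul_lt_mul_left h1
    have hb1 : b + 1 < M := by
      have h1 : nR * (b + 1) < nR * M := by
        have e : nR * (b + 1) = nR * b + nR := by ring
        have e2 : nR * M = M * nR := by ring
        omega
      exact Nat.lt_of_mul_lt_mul_left h1
    -- window value lemmas
    have hwlo : ∀ (t x : ℕ) (hx : x < M), t = nR * x + r → ∀ (k q : Fin nR),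
        (q : ℕ) = r + (k : ℕ) → window s nR t k = c ⟨x, hx⟩ q := by
      intro t x hx ht k q hq
      show s (t + (k : ℕ)) = _
      rw [show t + (k : ℕ) = nR * x + (q : ℕ) by omega, hs x q hx q.isLt]
    have hwhi : ∀ (t x : ℕ) (hx1 : x + 1 < M), t = nR * x + r → ∀ (k q : Fin nR),
        nR ≤ r + (k : ℕ) → (q : ℕ) = r + (k : ℕ) - nR → window s nR t k = c ⟨x + 1, hx1⟩ q := by
      intro t x hx1 ht k q hge hq
      show s (t + (k : ℕ)) = _
      have e : nR * (x + 1) = nR * x + nR := by ring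
      have hk' := k.isLt
      rw [show t + (k : ℕ) = nR * (x + 1) + (q : ℕ) by omega, hs (x + 1) q hx1 q.isLt]
    -- decompose the window distance
    have part1 : Dd (window s nR i) (window s nR j) 0 (nR - r)
        = Dd (c ⟨a, ha⟩) (c ⟨b, hb⟩) r nR := by
      unfold Dd
      refine Finset.card_bij'
        (fun k hk => (⟨r + (k : ℕ), by
          have h := (Finset.mem_filter.mp hk).2.2.1; omega⟩ : Fin nR))
        (fun p hp => (⟨(p : ℕ) - r, by have := p.isLt; omega⟩ : Fin nR)) ?_ ?_ ?_ ?_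
      · intro k hk
        obtain ⟨-, -, hlt, hne⟩ := Finset.mem_filter.mp hk
        refine Finset.mem_filter.mpr ⟨Finset.mem_univ _,
          show r ≤ r + (k : ℕ) from Nat.le_add_right _ _,
          show r + (k : ℕ) < nR by omega, ?_⟩
        rw [hwlo i a ha hia k ⟨r + (k : ℕ), by omega⟩ rfl,
            hwlo j b hb hja k ⟨r + (k : ℕ), by omega⟩ rfl] at hne
        exact hne
      · intro p hp
        obtain ⟨-, hrp, hplt, hne⟩ := Finset.mem_filter.mp hp
        have hplt' : (p : ℕ) - r < nR := by omega
        refine Finset.mem_filter.mpr ⟨Finset.mem_univ _, Nat.zero_le _,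
          show (p : ℕ) - r < nR - r by omega, ?_⟩
        rw [hwlo i a ha hia ⟨(p : ℕ) - r, hplt'⟩ p (show (p : ℕ) = r + ((p : ℕ) - r) by omega),
            hwlo j b hb hja ⟨(p : ℕ) - r, hplt'⟩ p (show (p : ℕ) = r + ((p : ℕ) - r) by omega)]
        exact hne
      · intro k hk
        exact Fin.ext (show r + (k : ℕ) - r = (k : ℕ) by omega)
      · intro p hp
        have hrp := (Finset.mem_filter.mp hp).2.1
        exact Fin.ext (show r + ((p : ℕ) - r) = (p : ℕ) by omega)
    have part2 : Dd (window s nR i) (window s nR j) (nR - r) nR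
        = Dd (c ⟨a + 1, ha1⟩) (c ⟨b + 1, hb1⟩) 0 r := by
      unfold Dd
      refine Finset.card_bij'
        (fun k hk => (⟨r + (k : ℕ) - nR, by have := k.isLt; omega⟩ : Fin nR))
        (fun p hp => (⟨(p : ℕ) + nR - r, by
          have h := (Finset.mem_filter.mp hp).2.2.1; omega⟩ : Fin nR)) ?_ ?_ ?_ ?_
      · intro k hk
        obtain ⟨-, hge, -, hne⟩ := Finset.mem_filter.mp hk
        have hklt := k.isLt
        refine Finset.mem_filter.mpr ⟨Finset.mem_univ _, Nat.zero_le _,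
          show r + (k : ℕ) - nR < r by omega, ?_⟩
        rw [hwhi i a ha1 hia k ⟨r + (k : ℕ) - nR, by omega⟩ (by omega)
              (show r + (k : ℕ) - nR = r + (k : ℕ) - nR from rfl),
            hwhi j b hb1 hja k ⟨r + (k : ℕ) - nR, by omega⟩ (by omega)
              (show r + (k : ℕ) - nR = r + (k : ℕ) - nR from rfl)] at hne
        exact hne
      · intro p hp
        obtain ⟨-, -, hplt, hne⟩ := Finset.mem_filter.mp hp
        have hplt' : (p : ℕ) + nR - r < nR := by omega
        refine Finset.mem_filter.mpr ⟨Finset.mem_univ _,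
          show nR - r ≤ (p : ℕ) + nR - r by omega,
          show (p : ℕ) + nR - r < nR by omega, ?_⟩
        rw [hwhi i a ha1 hia ⟨(p : ℕ) + nR - r, hplt'⟩ p
              (show nR ≤ r + ((p : ℕ) + nR - r) by omega)
              (show (p : ℕ) = r + ((p : ℕ) + nR - r) - nR by omega),
            hwhi j b hb1 hja ⟨(p : ℕ) + nR - r, hplt'⟩ p
              (show nR ≤ r + ((p : ℕ) + nR - r) by omega)
              (show (p : ℕ) = r + ((p : ℕ) + nR - r) - nR by omega)]
        exact hne
      · intro k hk
        have hge := (Finset.mem_filter.mp hk).2.1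
        have hklt := k.isLt
        exact Fin.ext (show (r + (k : ℕ) - nR) + nR - r = (k : ℕ) by omega)
      · intro p hp
        have hplt := (Finset.mem_filter.mp hp).2.2.1
        exact Fin.ext (show r + ((p : ℕ) + nR - r) - nR = (p : ℕ) by omega)
    have key : hammingDist (window s nR i) (window s nR j)
        = Dd (c ⟨a, ha⟩) (c ⟨b, hb⟩) r nR + Dd (c ⟨a + 1, ha1⟩) (c ⟨b + 1, hb1⟩) 0 r := by
      rw [Dd_full, Dd_split (window s nR i) (window s nR j) (Nat.zero_le (nR - r))
        (Nat.sub_le nR r), part1, part2]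
    rw [key]
    -- gray-code bounds on prefix distances
    have hga : Dd (c ⟨a, ha⟩) (c ⟨a + 1, ha1⟩) 0 kR ≤ 1 :=
      le_trans (Dd_prefix_le hk.le _ _) (le_of_eq (hgray ⟨a, ha⟩ ha1))
    have hgb : Dd (c ⟨b, hb⟩) (c ⟨b + 1, hb1⟩) 0 kR ≤ 1 :=
      le_trans (Dd_prefix_le hk.le _ _) (le_of_eq (hgray ⟨b, hb⟩ hb1))
    have hdist1 := hmin ⟨a, ha⟩ ⟨b, hb⟩ (Fin.ne_of_val_ne hab)
    have hdist2 := hmin ⟨a + 1, ha1⟩ ⟨b + 1, hb1⟩ (Fin.ne_of_val_ne (show a + 1 ≠ b + 1 by omega))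
    rw [Dd_full] at hdist1 hdist2
    rcases le_or_gt r kR with hrk | hrk
    · -- 0 < r ≤ kR
      have e1 : Dd (c ⟨a, ha⟩) (c ⟨b, hb⟩) 0 nR
          = Dd (c ⟨a, ha⟩) (c ⟨b, hb⟩) 0 r + Dd (c ⟨a, ha⟩) (c ⟨b, hb⟩) r nR :=
        Dd_split _ _ (Nat.zero_le r) hrlt.le
      have tri1 : Dd (c ⟨a, ha⟩) (c ⟨b, hb⟩) 0 r
          ≤ Dd (c ⟨a, ha⟩) (c ⟨a + 1, ha1⟩) 0 r + Dd (c ⟨a + 1, ha1⟩) (c ⟨b, hb⟩) 0 r :=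
        Dd_triangle _ _ _ _ _
      have tri2 : Dd (c ⟨a + 1, ha1⟩) (c ⟨b, hb⟩) 0 r
          ≤ Dd (c ⟨a + 1, ha1⟩) (c ⟨b + 1, hb1⟩) 0 r + Dd (c ⟨b + 1, hb1⟩) (c ⟨b, hb⟩) 0 r :=
        Dd_triangle _ _ _ _ _
      have m1 : Dd (c ⟨a, ha⟩) (c ⟨a + 1, ha1⟩) 0 kR
          = Dd (c ⟨a, ha⟩) (c ⟨a + 1, ha1⟩) 0 r + Dd (c ⟨a, ha⟩) (c ⟨a + 1, ha1⟩) r kR :=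
        Dd_split _ _ (Nat.zero_le r) hrk
      have m2 : Dd (c ⟨b, hb⟩) (c ⟨b + 1, hb1⟩) 0 kR
          = Dd (c ⟨b, hb⟩) (c ⟨b + 1, hb1⟩) 0 r + Dd (c ⟨b, hb⟩) (c ⟨b + 1, hb1⟩) r kR :=
        Dd_split _ _ (Nat.zero_le r) hrk
      have mc : Dd (c ⟨b + 1, hb1⟩) (c ⟨b, hb⟩) 0 r = Dd (c ⟨b, hb⟩) (c ⟨b + 1, hb1⟩) 0 r :=
        Dd_comm _ _ _ _
      omega
    · -- kR < r
      have e1 : Dd (c ⟨a, ha⟩) (c ⟨b, hb⟩) 0 nR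
          = Dd (c ⟨a, ha⟩) (c ⟨b, hb⟩) 0 kR + Dd (c ⟨a, ha⟩) (c ⟨b, hb⟩) kR nR :=
        Dd_split _ _ (Nat.zero_le kR) hk.le
      have e1b : Dd (c ⟨a, ha⟩) (c ⟨b, hb⟩) kR nR
          = Dd (c ⟨a, ha⟩) (c ⟨b, hb⟩) kR r + Dd (c ⟨a, ha⟩) (c ⟨b, hb⟩) r nR :=
        Dd_split _ _ hrk.le hrlt.le
      have e2 : Dd (c ⟨a + 1, ha1⟩) (c ⟨b + 1, hb1⟩) 0 nR
          = Dd (c ⟨a + 1, ha1⟩) (c ⟨b + 1, hb1⟩) 0 r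
            + Dd (c ⟨a + 1, ha1⟩) (c ⟨b + 1, hb1⟩) r nR :=
        Dd_split _ _ (Nat.zero_le r) hrlt.le
      have e2b : Dd (c ⟨a + 1, ha1⟩) (c ⟨b + 1, hb1⟩) 0 r
          = Dd (c ⟨a + 1, ha1⟩) (c ⟨b + 1, hb1⟩) 0 kR
            + Dd (c ⟨a + 1, ha1⟩) (c ⟨b + 1, hb1⟩) kR r :=
        Dd_split _ _ (Nat.zero_le kR) hrk.le
      have hq1 : Dd (c ⟨a, ha⟩) (c ⟨b, hb⟩) kR r ≤ r - kR := Dd_le _ _ _ _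
      have hq2 : Dd (c ⟨a + 1, ha1⟩) (c ⟨b + 1, hb1⟩) r nR ≤ nR - r := Dd_le _ _ _ _
      have tri1 : Dd (c ⟨a, ha⟩) (c ⟨b, hb⟩) 0 kR
          ≤ Dd (c ⟨a, ha⟩) (c ⟨a + 1, ha1⟩) 0 kR + Dd (c ⟨a + 1, ha1⟩) (c ⟨b, hb⟩) 0 kR :=
        Dd_triangle _ _ _ _ _
      have tri2 : Dd (c ⟨a + 1, ha1⟩) (c ⟨b, hb⟩) 0 kR
          ≤ Dd (c ⟨a + 1, ha1⟩) (c ⟨b + 1, hb1⟩) 0 kR + Dd (c ⟨b + 1, hb1⟩) (c ⟨b, hb⟩) 0 kR :=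
        Dd_triangle _ _ _ _ _
      have mc : Dd (c ⟨b + 1, hb1⟩) (c ⟨b, hb⟩) 0 kR = Dd (c ⟨b, hb⟩) (c ⟨b + 1, hb1⟩) 0 kR :=
        Dd_comm _ _ _ _
      omega

/-- The modular RPS built from a Gray-code ordering of Reed–Solomon codewords: let the
codewords `c_0, …, c_{M−1}` of length `n_R` have pairwise Hamming distance at least
`n_R − k_R + 1` (minimum distance of the Reed–Solomon code), and suppose consecutive
codewords differ in exactly one coordinate of their length-`k_R` prefixes (the Gray-code
property, via systematic encoding `c_i[0, k_R−1] = σ_i`). Then with `d + 1 = (n_R − k_R)/2`,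
the concatenation `c_0 c_1 ⋯ c_{M−1}` is an `(n_R, d+1)` modular robust positioning
sequence. -/
theorem gray_rs_concat_is_mrps {α : Type*} [DecidableEq α]
    (M nR kR d : ℕ) (hM : 0 < M) (hk : kR < nR) (hd : nR - kR = 2 * d + 2)
    (c : Fin M → Fin nR → α)
    (hmin : ∀ i j : Fin M, i ≠ j → nR - kR + 1 ≤ hammingDist (c i) (c j))
    (hgray : ∀ i : Fin M, ∀ h : (i : ℕ) + 1 < M,
      hammingDist (fun k : Fin kR => c i (Fin.castLE hk.le k))
        (fun k : Fin kR => c ⟨(i : ℕ) + 1, h⟩ (Fin.castLE hk.le k)) = 1) :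
    IsMRPS (fun t => c ⟨(t / nR) % M, Nat.mod_lt _ hM⟩ ⟨t % nR, Nat.mod_lt _ (by omega)⟩)
      (M * nR) nR (d + 1) := by
  exact main_aux M nR kR d hM hk hd c hmin hgray _
    (fun a r' ha hr' => s_val hM (by omega) c a r' ha hr')
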